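/- Let Y = {(x,y) ∈ ℝ² : (x/a)² + y² = 1} be an ellipse with a > 1. Given a point p ∈ Y with p ∉ {(±a,0),(0,±1)}, there is exactly one point q in the open quadrant diametrically opposite to the quadrant of p (i.e. on the other side of both coordinate axes) such that the normal line to Y at q passes through p, that is, h(q) = p. In particular the map h : Y → Y is surjective. -/

import Mathlib

open Filter Topology Metric

noncomputable section

/-! ### The ellipse -/

/-- The point `(x, y)` of the Euclidean plane. -/
def pt2 (x y : ℝ) : EuclideanSpace ℝ (Fin 2) := (WithLp.equiv 2 (Fin 2 → ℝ)).symm ![x, y]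

/-- The ellipse `{(x,y) : (x/a)² + y² = 1}` in the Euclidean plane. -/
def ellipse (a : ℝ) : Set (EuclideanSpace ℝ (Fin 2)) :=
  {p | (p 0 / a) ^ 2 + (p 1) ^ 2 = 1}

/-- `r₁ = 4√3·a/(a²+3)`. -/
def ellipseR1 (a : ℝ) : ℝ := 4 * Real.sqrt 3 * a / (a ^ 2 + 3)

/-- `r₂ = 4√3·a²/(3a²+1)`. -/
def ellipseR2 (a : ℝ) : ℝ := 4 * Real.sqrt 3 * a ^ 2 / (3 * a ^ 2 + 1)

/-- A direction vector of the line normal to the ellipse `(x/a)² + y² = 1` at the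
point `p` (proportional to the gradient `(2x/a², 2y)` at `p`). -/
def normalDir (a : ℝ) (p : EuclideanSpace ℝ (Fin 2)) : EuclideanSpace ℝ (Fin 2) :=
  pt2 (p 0 / a ^ 2) (p 1)

lemma pt2_apply_zero (x y : ℝ) : pt2 x y 0 = x := by simp [pt2]
lemma pt2_apply_one (x y : ℝ) : pt2 x y 1 = y := by simp [pt2]
lemma ext2 {p q : EuclideanSpace ℝ (Fin 2)} (h0 : p 0 = q 0) (h1 : p 1 = q 1) : p = q := by
  ext i; fin_cases i <;> assumption

lemma line_apply_zero (a : ℝ) (q : EuclideanSpace ℝ (Fin 2)) (t : ℝ) :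
    (q + t • normalDir a q) 0 = q 0 + t * (q 0 / a ^ 2) := by
  simp [PiLp.add_apply, PiLp.smul_apply, normalDir, pt2_apply_zero]
lemma line_apply_one (a : ℝ) (q : EuclideanSpace ℝ (Fin 2)) (t : ℝ) :
    (q + t • normalDir a q) 1 = q 1 + t * q 1 := by
  simp [PiLp.add_apply, PiLp.smul_apply, normalDir, pt2_apply_one]

/-- Strict monotonicity of `f s = A/(s+c)² + B/s²` on `(-∞,-c)`. -/
lemma f_strictMono {A B c : ℝ} (hA : 0 < A) (hB : 0 < B) (hc : 0 < c) :
    StrictMonoOn (fun s : ℝ => A / (s + c) ^ 2 + B / s ^ 2) (Set.Iio (-c)) := by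
  intro x hx y hy hxy
  simp only [Set.mem_Iio] at hx hy
  have hxc : x + c < 0 := by linarith
  have hyc : y + c < 0 := by linarith
  have hx0 : x < 0 := by linarith
  have hy0 : y < 0 := by linarith
  have h1 : (y + c) ^ 2 < (x + c) ^ 2 := by nlinarith
  have h2 : y ^ 2 < x ^ 2 := by nlinarith
  have p1 : (0:ℝ) < (y + c) ^ 2 := (sq_nonneg _).lt_of_ne' (pow_ne_zero 2 hyc.ne)
  have p2 : (0:ℝ) < y ^ 2 := (sq_nonneg _).lt_of_ne' (pow_ne_zero 2 hy0.ne)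
  have := div_lt_div_of_pos_left hA p1 h1
  have := div_lt_div_of_pos_left hB p2 h2
  dsimp only
  linarith

lemma f_root {A B c : ℝ} (hA : 0 < A) (hB : 0 < B) (hc : 0 < c) :
    ∃ s < -c, A / (s + c) ^ 2 + B / s ^ 2 = 1 := by
  set f : ℝ → ℝ := fun s => A / (s + c) ^ 2 + B / s ^ 2 with hf
  have hsA : (0:ℝ) < Real.sqrt A := Real.sqrt_pos.2 hA
  have hsA2 : Real.sqrt A ^ 2 = A := Real.sq_sqrt hA.le
  have hs2A : Real.sqrt (2*A) ^ 2 = 2*A := Real.sq_sqrt (by linarith)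
  have hs2B : Real.sqrt (2*B) ^ 2 = 2*B := Real.sq_sqrt (by linarith)
  have hs2A0 : 0 ≤ Real.sqrt (2*A) := Real.sqrt_nonneg _
  have hs2B0 : 0 ≤ Real.sqrt (2*B) := Real.sqrt_nonneg _
  set s₂ : ℝ := -c - Real.sqrt A with hs₂
  set s₁ : ℝ := s₂ - Real.sqrt (2*A) - Real.sqrt (2*B) with hs₁
  have h12 : s₁ ≤ s₂ := by simp only [hs₁]; linarith
  have hs₂c : s₂ + c < 0 := by simp only [hs₂]; linarith
  have hcont : ContinuousOn f (Set.Icc s₁ s₂) := by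
    apply ContinuousOn.add
    · apply continuousOn_const.div (by fun_prop)
      intro s hs
      have h : s + c < 0 := by
        rcases hs with ⟨_, h2⟩
        linarith
      exact pow_ne_zero 2 h.ne
    · apply continuousOn_const.div (by fun_prop)
      intro s hs
      have h : s < 0 := by
        rcases hs with ⟨_, h2⟩
        linarith
      exact pow_ne_zero 2 h.ne
  have hf2 : 1 ≤ f s₂ := by
    have : f s₂ = A / (Real.sqrt A) ^ 2 + B / s₂ ^ 2 := by
      simp only [hf]
      congr 2
      rw [hs₂]; ring
    rw [this, hsA2, div_self hA.ne']
    have : 0 ≤ B / s₂ ^ 2 := by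
      have : s₂ < 0 := by linarith
      positivity
    linarith
  have hf1 : f s₁ ≤ 1 := by
    have hA' : A / (s₁ + c) ^ 2 ≤ 1/2 := by
      have hle : Real.sqrt (2*A) ≤ -(s₁ + c) := by simp only [hs₁, hs₂]; linarith
      have h2 : 2 * A ≤ (s₁ + c) ^ 2 := by nlinarith
      calc A / (s₁ + c) ^ 2 ≤ A / (2 * A) := by
            apply div_le_div_of_nonneg_left hA.le (by linarith) h2
        _ = 1/2 := by field_simp
    have hB' : B / s₁ ^ 2 ≤ 1/2 := by
      have hle : Real.sqrt (2*B) ≤ -s₁ := by simp only [hs₁, hs₂]; linarith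
      have h2 : 2 * B ≤ s₁ ^ 2 := by nlinarith
      calc B / s₁ ^ 2 ≤ B / (2 * B) := by
            apply div_le_div_of_nonneg_left hB.le (by linarith) h2
        _ = 1/2 := by field_simp
    simp only [hf]; linarith
  have : (1:ℝ) ∈ Set.Icc (f s₁) (f s₂) := ⟨hf1, hf2⟩
  obtain ⟨s, hsmem, hfs⟩ := intermediate_value_Icc h12 hcont this
  exact ⟨s, by rcases hsmem with ⟨_, h2⟩; linarith, hfs⟩
section Algebra
variable {a u v x y s t c : ℝ}

lemma algA (ha : a ≠ 0) (h : t + 1 + (a^2 - 1) ≠ 0) :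
    (a * (u + t * (u / a ^ 2))) ^ 2 / (t + 1 + (a^2 - 1)) ^ 2 = (u / a) ^ 2 := by
  have h' : a ^ 2 + t ≠ 0 := by intro hh; apply h; linarith
  have e : t + 1 + (a^2 - 1) = a^2 + t := by ring
  rw [e, div_eq_iff (pow_ne_zero 2 h')]
  field_simp

lemma algB (h : t + 1 ≠ 0) : (v + t * v) ^ 2 / (t + 1) ^ 2 = v ^ 2 := by
  field_simp
  ring

lemma algC (ha : a ≠ 0) (hsc : s + c ≠ 0) :
    (a ^ 2 * x / (s + c) / a) ^ 2 = (a * x) ^ 2 / (s + c) ^ 2 := by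
  field_simp

lemma algD (ha : a ≠ 0) (hsc : s + (a ^ 2 - 1) ≠ 0) :
    a ^ 2 * x / (s + (a ^ 2 - 1)) + (s - 1) * (a ^ 2 * x / (s + (a ^ 2 - 1)) / a ^ 2) = x := by
  field_simp
  ring

lemma algE (hs : s ≠ 0) : y / s + (s - 1) * (y / s) = y := by
  field_simp
  ring

lemma algF (ha : a ≠ 0) (h : t + 1 + (a^2 - 1) ≠ 0) :
    u = a ^ 2 * (u + t * (u / a ^ 2)) / (t + 1 + (a^2 - 1)) := by
  have h' : a ^ 2 + t ≠ 0 := by intro hh; apply h; linarith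
  have e : t + 1 + (a^2 - 1) = a^2 + t := by ring
  rw [e, eq_div_iff h']
  field_simp

lemma algG (h : t + 1 ≠ 0) : v = (v + t * v) / (t + 1) := by
  field_simp
  ring

lemma algH (ha : a ≠ 0) : u * (u + t * (u / a ^ 2)) = u ^ 2 * (t + 1 + (a ^ 2 - 1)) / a ^ 2 := by
  field_simp
  ring
end Algebra

/-- Main lemma: existence and uniqueness for nondegenerate points. -/
lemma main_lemma (a : ℝ) (ha : 1 < a) (p : EuclideanSpace ℝ (Fin 2)) (hp : p ∈ ellipse a)
    (h0 : p 0 ≠ 0) (h1 : p 1 ≠ 0) :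
    ∃! q : EuclideanSpace ℝ (Fin 2), q ∈ ellipse a ∧
      q 0 * p 0 < 0 ∧ q 1 * p 1 < 0 ∧ ∃ t : ℝ, p = q + t • normalDir a q := by
  have ha0 : (0:ℝ) < a := by linarith
  have haz : a ≠ 0 := ha0.ne'
  set A : ℝ := (a * p 0) ^ 2 with hAdef
  set B : ℝ := (p 1) ^ 2 with hBdef
  set c : ℝ := a ^ 2 - 1 with hcdef
  have hA : 0 < A := by positivity
  have hB : 0 < B := by positivity
  have hc : 0 < c := by simp only [hcdef]; nlinarith
  obtain ⟨s, hs, hfs⟩ := f_root hA hB hc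
  have hsc : s + c < 0 := by linarith
  have hs0 : s < 0 := by linarith
  set q : EuclideanSpace ℝ (Fin 2) := pt2 (a ^ 2 * p 0 / (s + c)) (p 1 / s) with hqdef
  have hq0 : q 0 = a ^ 2 * p 0 / (s + c) := pt2_apply_zero _ _
  have hq1 : q 1 = p 1 / s := pt2_apply_one _ _
  have key : ∀ q' : EuclideanSpace ℝ (Fin 2), (q' ∈ ellipse a ∧
      q' 0 * p 0 < 0 ∧ q' 1 * p 1 < 0 ∧ ∃ t : ℝ, p = q' + t • normalDir a q') →
      ∃ s' : ℝ, s' + c < 0 ∧ A / (s' + c) ^ 2 + B / s' ^ 2 = 1 ∧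
        q' 0 = a ^ 2 * p 0 / (s' + c) ∧ q' 1 = p 1 / s' := by
    rintro q' ⟨he, hsgn0, hsgn1, t, ht⟩
    have e0 : p 0 = q' 0 + t * (q' 0 / a ^ 2) := by
      rw [ht]; exact line_apply_zero a q' t
    have e1 : p 1 = q' 1 + t * q' 1 := by
      rw [ht]; exact line_apply_one a q' t
    have hq'0 : q' 0 ≠ 0 := fun h => by rw [h] at hsgn0; simp at hsgn0
    have hq'1 : q' 1 ≠ 0 := fun h => by rw [h] at hsgn1; simp at hsgn1
    have hq'0sq : 0 < (q' 0) ^ 2 := (sq_nonneg _).lt_of_ne' (pow_ne_zero 2 hq'0)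
    have hsc' : t + 1 + c < 0 := by
      by_contra hcon
      push_neg at hcon
      have hexp : q' 0 * p 0 = (q' 0) ^ 2 * (t + 1 + c) / a ^ 2 := by
        rw [e0]; simp only [hcdef]; exact algH haz
      rw [hexp] at hsgn0
      have : 0 ≤ (q' 0) ^ 2 * (t + 1 + c) / a ^ 2 :=
        div_nonneg (mul_nonneg (sq_nonneg _) hcon) (sq_nonneg _)
      linarith
    have hsne : t + 1 ≠ 0 := by
      intro h
      have : p 1 = 0 := by rw [e1]; nlinarith [h]
      exact h1 this
    have hscne : t + 1 + c ≠ 0 := hsc'.ne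
    refine ⟨t + 1, hsc', ?_, ?_, ?_⟩
    · have hA' : A / (t + 1 + c) ^ 2 = (q' 0 / a) ^ 2 := by
        simp only [hAdef, hcdef]
        rw [e0]
        exact algA haz (by simpa [hcdef] using hscne)
      have hB' : B / (t + 1) ^ 2 = (q' 1) ^ 2 := by
        simp only [hBdef]
        rw [e1]
        exact algB hsne
      rw [hA', hB']
      exact he
    · rw [e0]; simp only [hcdef]; exact algF haz (by simpa [hcdef] using hscne)
    · rw [e1]; exact algG hsne
  have hmono := f_strictMono hA hB hc
  have hqsol : q ∈ ellipse a ∧ q 0 * p 0 < 0 ∧ q 1 * p 1 < 0 ∧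
      ∃ t : ℝ, p = q + t • normalDir a q := by
    refine ⟨?_, ?_, ?_, ⟨s - 1, ?_⟩⟩
    · show (q 0 / a) ^ 2 + (q 1) ^ 2 = 1
      rw [hq0, hq1, algC haz hsc.ne, div_pow]
      exact hfs
    · rw [hq0]
      have hrw : a ^ 2 * p 0 / (s + c) * p 0 = a ^ 2 * p 0 ^ 2 / (s + c) := by ring
      rw [hrw]
      apply div_neg_of_pos_of_neg _ hsc
      positivity
    · rw [hq1]
      have hrw : p 1 / s * p 1 = p 1 ^ 2 / s := by ring
      rw [hrw]
      apply div_neg_of_pos_of_neg _ hs0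
      positivity
    · apply ext2
      · rw [line_apply_zero, hq0]
        simp only [hcdef] at hsc ⊢
        exact (algD haz hsc.ne).symm
      · rw [line_apply_one, hq1]
        exact (algE hs0.ne).symm
  refine ⟨q, hqsol, ?_⟩
  rintro q' h'
  obtain ⟨s', hs'c, hfs', hq'c0, hq'c1⟩ := key q' h'
  have hss' : s' = s := by
    have := hmono.injOn (Set.mem_Iio.2 (by linarith : s' < -c))
      (Set.mem_Iio.2 (by linarith : s < -c))
    exact this (by rw [hfs', hfs])
  apply ext2
  · rw [hq'c0, hq0, hss']
  · rw [hq'c1, hq1, hss']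

/-- **Normals to the ellipse from the opposite quadrant** (Adamaszek–Adams–Reddy,
Lemma 6.2). Let `Y` be an ellipse with `a > 1`. For every `p ∈ Y` not among
`(±a, 0), (0, ±1)` there is exactly one point `q` in the open quadrant diametrically
opposite to that of `p` whose normal line passes through `p` (i.e. `h(q) = p`).
In particular, `h : Y → Y` is surjective: every point of `Y` lies on the normal line
of some other point of `Y`. -/
theorem ellipse_normal_opposite_quadrant (a : ℝ) (ha : 1 < a)
    (p : EuclideanSpace ℝ (Fin 2)) (hp : p ∈ ellipse a)
    (hp1 : p ≠ pt2 a 0) (hp2 : p ≠ pt2 (-a) 0)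
    (hp3 : p ≠ pt2 0 1) (hp4 : p ≠ pt2 0 (-1)) :
    (∃! q : EuclideanSpace ℝ (Fin 2), q ∈ ellipse a ∧
      q 0 * p 0 < 0 ∧ q 1 * p 1 < 0 ∧ ∃ t : ℝ, p = q + t • normalDir a q) ∧
    (∀ p' ∈ ellipse a, ∃ q ∈ ellipse a, q ≠ p' ∧ ∃ t : ℝ, p' = q + t • normalDir a q) := by
  have ha0 : (0:ℝ) < a := by linarith
  have haz : a ≠ 0 := ha0.ne'
  have hpe : (p 0 / a) ^ 2 + (p 1) ^ 2 = 1 := hp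
  have h0 : p 0 ≠ 0 := by
    intro h
    have h1sq : (p 1) ^ 2 = 1 := by
      rw [h] at hpe; simpa using hpe
    have hfac : (p 1 - 1) * (p 1 + 1) = 0 := by nlinarith [h1sq]
    have : p 1 = 1 ∨ p 1 = -1 := by
      rcases mul_eq_zero.mp hfac with h' | h'
      · left; linarith
      · right; linarith
    rcases this with h' | h'
    · exact hp3 (ext2 (by rw [h, pt2_apply_zero]) (by rw [h', pt2_apply_one]))
    · exact hp4 (ext2 (by rw [h, pt2_apply_zero]) (by rw [h', pt2_apply_one]))
  have h1 : p 1 ≠ 0 := by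
    intro h
    have h0sq : (p 0 / a) ^ 2 = 1 := by
      rw [h] at hpe; simpa using hpe
    have hsq : p 0 ^ 2 = a ^ 2 := by
      field_simp at h0sq
      linarith
    have hfac : (p 0 - a) * (p 0 + a) = 0 := by nlinarith [hsq]
    have : p 0 = a ∨ p 0 = -a := by
      rcases mul_eq_zero.mp hfac with h' | h'
      · left; linarith
      · right; linarith
    rcases this with h' | h'
    · exact hp1 (ext2 (by rw [h', pt2_apply_zero]) (by rw [h, pt2_apply_one]))
    · exact hp2 (ext2 (by rw [h', pt2_apply_zero]) (by rw [h, pt2_apply_one]))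
  constructor
  · exact main_lemma a ha p hp h0 h1
  · intro p' hp'
    have hpe' : (p' 0 / a) ^ 2 + (p' 1) ^ 2 = 1 := hp'
    by_cases hy : p' 1 = 0
    · -- p' = (±a, 0); take q = (-p' 0, 0)
      have hx : p' 0 ≠ 0 := by
        intro h
        rw [h, hy] at hpe'
        simp at hpe'
      refine ⟨pt2 (-(p' 0)) 0, ?_, ?_, ⟨-2 * a ^ 2, ?_⟩⟩
      · show (pt2 (-(p' 0)) 0 0 / a) ^ 2 + (pt2 (-(p' 0)) 0 1) ^ 2 = 1
        rw [pt2_apply_zero, pt2_apply_one]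
        rw [hy] at hpe'
        linear_combination hpe'
      · intro h
        have := congrArg (fun v : EuclideanSpace ℝ (Fin 2) => v 0) h
        simp only [pt2_apply_zero] at this
        apply hx
        linarith
      · apply ext2
        · rw [line_apply_zero, pt2_apply_zero]
          field_simp
          ring
        · rw [line_apply_one, pt2_apply_one, hy]
          ring
    · by_cases hx : p' 0 = 0
      · -- p' = (0, ±1); take q = (0, -p' 1)
        refine ⟨pt2 0 (-(p' 1)), ?_, ?_, ⟨-2, ?_⟩⟩
        · show (pt2 0 (-(p' 1)) 0 / a) ^ 2 + (pt2 0 (-(p' 1)) 1) ^ 2 = 1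
          rw [pt2_apply_zero, pt2_apply_one]
          rw [hx] at hpe'
          linear_combination hpe'
        · intro h
          have := congrArg (fun v : EuclideanSpace ℝ (Fin 2) => v 1) h
          simp only [pt2_apply_one] at this
          apply hy
          linarith
        · apply ext2
          · rw [line_apply_zero, pt2_apply_zero, hx]
            ring
          · rw [line_apply_one, pt2_apply_one]
            ring
      · obtain ⟨q, ⟨hqe, hq0, hq1, t, ht⟩, _⟩ := main_lemma a ha p' hp' hx hy
        refine ⟨q, hqe, ?_, ⟨t, ht⟩⟩
        intro h
        rw [h] at hq0
        exact absurd hq0 (not_lt.2 (mul_self_nonneg _))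
end
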